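/- Let A₀ > 0, c ∈ ℂ with Re(c) ≠ 0, f, h ∈ ℝ with f ≠ 0, d ∈ ℂ with h·Re(d) ≠ 0, and set ĉ := c − dh/f with Re(ĉ) ≠ 0. Then for every real σ̌ ≠ 0, the quadratic q(λ) = λ² − (2A₀²Re(c) + ifσ̌)λ + 2A₀²ifσ̌·Re(ĉ) has no purely imaginary root λ = iτ with τ ∈ ℝ. -/

import Mathlib

open Complex

theorem no_imaginary_roots_region_ii (c d : ℂ) (A₀ f h : ℝ)
    (hA : 0 < A₀) (hc : c.re ≠ 0) (hf : f ≠ 0)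
    (hhd : h * d.re ≠ 0)
    (hchat : (c - d * ((h : ℂ) / (f : ℂ))).re ≠ 0) :
    ∀ σ τ : ℝ, σ ≠ 0 →
      (I * (τ : ℂ)) ^ 2 -
          ((2 * A₀ ^ 2 * c.re : ℝ) + I * (f : ℂ) * (σ : ℂ)) * (I * (τ : ℂ)) +
          2 * (A₀ : ℂ) ^ 2 * I * (f : ℂ) * (σ : ℂ) *
            (((c - d * ((h : ℂ) / (f : ℂ))).re : ℝ) : ℂ) ≠ 0 := by
  intro σ τ hσ heq
  set cr := c.re with hcr
  set er := (c - d * ((h : ℂ) / (f : ℂ))).re with her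
  have hre : -τ^2 + f * σ * τ = 0 := by
    have := congrArg Complex.re heq
    simpa [Complex.ext_iff, pow_two, mul_comm, mul_left_comm, mul_assoc] using this
  have him : -(2 * A₀^2 * cr) * τ + 2 * A₀^2 * (f * σ) * er = 0 := by
    have := congrArg Complex.im heq
    simp [Complex.ext_iff, pow_two] at this
    ring_nf at this ⊢
    linarith [this]
  have hA2 : (2 : ℝ) * A₀^2 ≠ 0 := by positivity
  have herval : er = cr - d.re * (h / f) := by
    rw [her, hcr]
    simp [Complex.sub_re, Complex.mul_re, Complex.div_re]
    field_simp
    left; trivial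
  rcases mul_eq_zero.mp (by nlinarith [hre] : τ * (f * σ - τ) = 0) with h0 | h0
  · -- τ = 0
    rw [h0] at him
    have h2 : (2 * A₀^2) * (f * σ * er) = 0 := by linear_combination him
    have h3 : f * σ * er = 0 := by
      rcases mul_eq_zero.mp h2 with h1 | h1
      · exact absurd h1 hA2
      · exact h1
    have hfs : f * σ ≠ 0 := mul_ne_zero hf hσ
    have : er = 0 := by
      rcases mul_eq_zero.mp h3 with h1 | h1
      · exact absurd h1 hfs
      · exact h1
    exact hchat (her ▸ this)
  · -- τ = f σ
    have hτ : τ = f * σ := by linarith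
    rw [hτ] at him
    have key0 : (2 * A₀^2) * (f * σ * (er - cr)) = 0 := by linear_combination him
    have key : f * σ * (er - cr) = 0 := by
      rcases mul_eq_zero.mp key0 with h1 | h1
      · exact absurd h1 hA2
      · exact h1
    rcases mul_eq_zero.mp key with h1 | h1
    · exact (mul_ne_zero hf hσ) h1
    · have he : er = cr := by linarith
      rw [herval] at he
      have hz : d.re * (h / f) = 0 := by linarith
      rcases mul_eq_zero.mp hz with h2 | h2
      · exact hhd (by rw [h2]; ring)
      · have h3 : h = 0 := by
          rcases div_eq_zero_iff.mp h2 with h3 | h3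
          · exact h3
          · exact absurd h3 hf
        exact hhd (by rw [h3]; ring)
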